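/- Let p be a rational number with p ≠ 0, and α, β ∈ ℂ² linearly independent with α·α = 2/p + 2j (j ∈ ℤ), 2 α·β + 2 α·α = 0, and β·β = 1. Then the rank-2 central charge equals −25 + 24/(k+3) + 6(k+3), where 1/p + j = −1/(k+1) (assuming k+1 ≠ 0 and k+3 ≠ 0). In particular it equals minus the central charge 25 − 24/(k+3) − 6(k+3) of the W₃^{(2)} (Bershadsky–Polyakov) algebra. -/

import Mathlib

noncomputable def dot2 (x y : Fin 2 → ℂ) : ℂ := x 0 * y 0 + x 1 * y 1

noncomputable def crank2 (α β : Fin 2 → ℂ) : ℂ :=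
  2 - 3 * ((4 + dot2 α α * dot2 β β) * dot2 (α - β) (α - β)
      + 4 * dot2 (α - β) (dot2 α α • β - dot2 β β • α)) /
    (dot2 α α * dot2 β β - (dot2 α β) ^ 2)

theorem case41_central_charge (p : ℚ) (hp : p ≠ 0) (j : ℤ) (k : ℚ)
    (hk1 : k + 1 ≠ 0) (hk3 : k + 3 ≠ 0)
    (hrel : 1 / p + (j : ℚ) = -1 / (k + 1))
    (α β : Fin 2 → ℂ) (hlin : LinearIndependent ℂ ![α, β])
    (haa : dot2 α α = 2 / (p : ℂ) + 2 * (j : ℂ))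
    (hab : 2 * dot2 α β + 2 * dot2 α α = 0)
    (hbb : dot2 β β = 1) :
    ∀ ξ : Fin 2 → ℂ, ξ ∈ Submodule.span ℂ ({α, β} : Set (Fin 2 → ℂ)) →
      (1/2 : ℂ) * dot2 α α - dot2 ξ α = 1 →
      (1/2 : ℂ) * dot2 β β - dot2 ξ β = 1 →
      2 - 12 * dot2 ξ ξ = -25 + 24 / ((k : ℂ) + 3) + 6 * ((k : ℂ) + 3) ∧
      2 - 12 * dot2 ξ ξ = -(25 - 24 / ((k : ℂ) + 3) - 6 * ((k : ℂ) + 3)) := by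
  intro ξ hmem h1 h2
  obtain ⟨a, b, hξ⟩ := Submodule.mem_span_pair.mp hmem
  subst hξ
  have hpC : (p : ℂ) ≠ 0 := by exact_mod_cast hp
  have hK1 : (k : ℂ) + 1 ≠ 0 := by
    have : ((k + 1 : ℚ) : ℂ) ≠ 0 := by exact_mod_cast hk1
    push_cast at this; exact this
  have hK3 : (k : ℂ) + 3 ≠ 0 := by
    have : ((k + 3 : ℚ) : ℂ) ≠ 0 := by exact_mod_cast hk3
    push_cast at this; exact this
  have hrelC : 1 / (p : ℂ) + (j : ℂ) = -1 / ((k : ℂ) + 1) := by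
    have : ((1 / p + (j : ℚ) : ℚ) : ℂ) = ((-1 / (k + 1) : ℚ) : ℂ) := by exact_mod_cast hrel
    push_cast at this; convert this using 2 <;> norm_num
  set K : ℂ := (k : ℂ) with hKdef
  set A : ℂ := dot2 α α with hAdef
  have hA' : (K + 1) * A = -2 := by
    rw [haa]
    field_simp at hrelC ⊢
    linear_combination hrelC
  have hC : dot2 α β = -A := by linear_combination hab / 2
  have dξα : dot2 (a • α + b • β) α = a * dot2 α α + b * dot2 α β := by
    simp [dot2]; ring
  have dξβ : dot2 (a • α + b • β) β = a * dot2 α β + b * dot2 β β := by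
    simp [dot2]; ring
  have dξξ : dot2 (a • α + b • β) (a • α + b • β)
      = a ^ 2 * dot2 α α + 2 * a * b * dot2 α β + b ^ 2 * dot2 β β := by
    simp [dot2]; ring
  rw [dξα, hC] at h1
  rw [dξβ, hC, hbb] at h2
  rw [dξξ, hC, hbb]
  -- h1 : 1/2 * A - (a * A + b * (-A)) = 1
  -- h2 : 1/2 * 1 - (a * (-A) + b * 1) = 1
  have hb2 : b = a * A - 1 / 2 := by linear_combination -h2
  have haA : a * A * (A - 1) = 1 := by linear_combination h1 + A * h2
  have ha2 : 2 * (K + 3) * a = (K + 1) ^ 2 := by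
    linear_combination (K + 1) ^ 2 * haA + (a * (K + 3) - a * (K + 1) * A) * hA'
  have hxx : a ^ 2 * A + 2 * a * b * (-A) + b ^ 2 * 1 = 1 / 4 - a := by
    linear_combination (-a) * haA + (b - a * A - 1 / 2) * hb2
  rw [hxx]
  constructor <;> (field_simp; linear_combination 24 * ha2)
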